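/- Let n ≥ 3 be an integer. There exist constants C₁ > 0 and C₂ > 0, depending only on n, such that for all T > 0 and R > 0 one has C₁ · min{√T, R} ≤ φ_n(T,R) ≤ C₂ · min{√T, R}, where φ_n(T,R) = ∫_0^T ∫_0^R r^{n-2} t^{-n/2} exp(-r²/(4t)) dr dt. -/

import Mathlib

open MeasureTheory Real Set

namespace Stmt4Aux

noncomputable def Fk (n : ℕ) (t r : ℝ) : ℝ :=
  r ^ ((n:ℝ) - 2) * t ^ (-(n:ℝ) / 2) * Real.exp (-(r ^ 2) / (4 * t))

noncomputable def cg (n : ℕ) : ℝ :=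
  4 ^ (((n:ℝ) - 1) / 2) * (1 / 2) * Real.Gamma (((n:ℝ) - 1) / 2)

lemma hn3 {n : ℕ} (hn : 3 ≤ n) : (3:ℝ) ≤ (n:ℝ) := by exact_mod_cast hn

lemma cg_pos {n : ℕ} (hn : 3 ≤ n) : 0 < cg n := by
  have h := hn3 hn
  have : 0 < Real.Gamma (((n:ℝ) - 1) / 2) := Real.Gamma_pos_of_pos (by linarith)
  unfold cg; positivity

lemma Fk_meas (n : ℕ) : Measurable fun p : ℝ × ℝ => Fk n p.1 p.2 := by
  unfold Fk; fun_prop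

lemma Fk_cont (n : ℕ) (hn : 3 ≤ n) (t : ℝ) : Continuous (Fk n t) := by
  have h2 : (0:ℝ) ≤ (n:ℝ) - 2 := by
    have : (3:ℝ) ≤ (n:ℝ) := by exact_mod_cast hn
    linarith
  unfold Fk
  exact ((Real.continuous_rpow_const h2).mul continuous_const).mul
    (Real.continuous_exp.comp ((continuous_pow 2).neg.div_const _))

lemma Fk_integrableOn (n : ℕ) (hn : 3 ≤ n) (t R : ℝ) :
    IntegrableOn (Fk n t) (Ioo 0 R) := by
  exact ((Fk_cont n hn t).intervalIntegrable 0 R).1.mono_set Ioo_subset_Ioc_self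

lemma Fk_nonneg (n : ℕ) {t r : ℝ} (ht : 0 < t) (hr : 0 ≤ r) : 0 ≤ Fk n t r := by
  unfold Fk
  have := Real.exp_nonneg (-(r ^ 2) / (4 * t))
  positivity

lemma Fk_eq (n : ℕ) {t : ℝ} (ht : 0 < t) (r : ℝ) :
    Fk n t r = t ^ (-(n:ℝ) / 2) * (r ^ ((n:ℝ) - 2) * Real.exp (-(1 / (4 * t)) * r ^ (2:ℝ))) := by
  unfold Fk
  rw [show (2:ℝ) = ((2:ℕ):ℝ) by norm_num, Real.rpow_natCast]
  have h : -(r ^ 2) / (4 * t) = -(1 / (4 * t)) * r ^ (2:ℕ) := by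
    field_simp
  rw [h]; ring

lemma inner_le_gauss (n : ℕ) (hn : 3 ≤ n) {t : ℝ} (R : ℝ) (ht : 0 < t) :
    ∫ r in Ioo (0:ℝ) R, Fk n t r ≤ cg n * t ^ (-(1:ℝ) / 2) := by
  have h3 := hn3 hn
  have hq : (-1:ℝ) < (n:ℝ) - 2 := by linarith
  have hb : (0:ℝ) < 1 / (4 * t) := by positivity
  have hint : IntegrableOn (fun r : ℝ => r ^ ((n:ℝ) - 2) *
      Real.exp (-(1 / (4 * t)) * r ^ (2:ℝ))) (Ioi 0) :=
    integrableOn_rpow_mul_exp_neg_mul_rpow hq two_pos hb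
  have step1 : ∫ r in Ioo (0:ℝ) R, Fk n t r =
      t ^ (-(n:ℝ) / 2) * ∫ r in Ioo (0:ℝ) R,
        (r ^ ((n:ℝ) - 2) * Real.exp (-(1 / (4 * t)) * r ^ (2:ℝ))) := by
    simp_rw [Fk_eq n ht]
    exact integral_const_mul _ _
  rw [step1]
  have step2 : (∫ r in Ioo (0:ℝ) R,
        (r ^ ((n:ℝ) - 2) * Real.exp (-(1 / (4 * t)) * r ^ (2:ℝ)))) ≤
      ∫ r in Ioi (0:ℝ), (r ^ ((n:ℝ) - 2) * Real.exp (-(1 / (4 * t)) * r ^ (2:ℝ))) := by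
    apply setIntegral_mono_set hint
    · filter_upwards [ae_restrict_mem measurableSet_Ioi] with r hr
      have hr' : (0:ℝ) < r := hr
      positivity
    · exact HasSubset.Subset.eventuallyLE (fun x hx => hx.1)
  have hval : ∫ r in Ioi (0:ℝ), (r ^ ((n:ℝ) - 2) * Real.exp (-(1 / (4 * t)) * r ^ (2:ℝ)))
      = (1 / (4 * t)) ^ (-(((n:ℝ) - 2) + 1) / 2) * (1 / 2) *
        Real.Gamma ((((n:ℝ) - 2) + 1) / 2) :=
    integral_rpow_mul_exp_neg_mul_rpow two_pos hq hb
  have hpow : (1 / (4 * t)) ^ (-(((n:ℝ) - 2) + 1) / 2) =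
      4 ^ (((n:ℝ) - 1) / 2) * t ^ (((n:ℝ) - 1) / 2) := by
    rw [one_div, Real.inv_rpow (by positivity), ← Real.rpow_neg (by positivity)]
    rw [show -(-(((n:ℝ) - 2) + 1) / 2) = ((n:ℝ) - 1) / 2 by ring]
    exact Real.mul_rpow (by norm_num) ht.le
  have hgam : (((n:ℝ) - 2) + 1) / 2 = ((n:ℝ) - 1) / 2 := by ring
  have htt : t ^ (-(n:ℝ) / 2) * t ^ (((n:ℝ) - 1) / 2) = t ^ (-(1:ℝ) / 2) := by
    rw [← Real.rpow_add ht]; congr 1; ring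
  calc t ^ (-(n:ℝ) / 2) * ∫ r in Ioo (0:ℝ) R,
        (r ^ ((n:ℝ) - 2) * Real.exp (-(1 / (4 * t)) * r ^ (2:ℝ)))
      ≤ t ^ (-(n:ℝ) / 2) * ∫ r in Ioi (0:ℝ),
        (r ^ ((n:ℝ) - 2) * Real.exp (-(1 / (4 * t)) * r ^ (2:ℝ))) := by
        apply mul_le_mul_of_nonneg_left step2 (Real.rpow_nonneg ht.le _)
    _ = cg n * t ^ (-(1:ℝ) / 2) := by
        rw [hval, hpow, hgam, ← htt]; unfold cg; ring

lemma integral_rpow_Ioo {q : ℝ} (hq : -1 < q) {R : ℝ} (hR : 0 ≤ R) :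
    ∫ r in Ioo (0:ℝ) R, r ^ q = R ^ (q + 1) / (q + 1) := by
  rw [← integral_Ioc_eq_integral_Ioo, ← intervalIntegral.integral_of_le hR,
    integral_rpow (Or.inl hq), Real.zero_rpow (by linarith : q + 1 ≠ 0), sub_zero]

lemma inner_le_pow (n : ℕ) (hn : 3 ≤ n) {t R : ℝ} (ht : 0 < t) (hR : 0 < R) :
    ∫ r in Ioo (0:ℝ) R, Fk n t r ≤
      R ^ ((n:ℝ) - 1) / ((n:ℝ) - 1) * t ^ (-(n:ℝ) / 2) := by
  have h3 := hn3 hn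
  have hq : (-1:ℝ) < (n:ℝ) - 2 := by linarith
  have hmono : ∫ r in Ioo (0:ℝ) R, Fk n t r ≤
      ∫ r in Ioo (0:ℝ) R, (r ^ ((n:ℝ) - 2) * t ^ (-(n:ℝ) / 2)) := by
    apply setIntegral_mono_on (Fk_integrableOn n hn t R)
      (((intervalIntegral.intervalIntegrable_rpow' hq).1.mono_set
        Ioo_subset_Ioc_self).mul_const _) measurableSet_Ioo
    intro r hr
    unfold Fk
    have h1 : Real.exp (-(r ^ 2) / (4 * t)) ≤ 1 := by
      rw [Real.exp_le_one_iff]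
      have : 0 ≤ r ^ 2 / (4 * t) := by positivity
      linarith [neg_div (4*t) (r^2)]
    have h2 : 0 ≤ r ^ ((n:ℝ) - 2) * t ^ (-(n:ℝ) / 2) := by
      have := hr.1.le; positivity
    calc r ^ ((n:ℝ) - 2) * t ^ (-(n:ℝ) / 2) * Real.exp (-(r ^ 2) / (4 * t))
        ≤ r ^ ((n:ℝ) - 2) * t ^ (-(n:ℝ) / 2) * 1 := by
          exact mul_le_mul_of_nonneg_left h1 h2
      _ = r ^ ((n:ℝ) - 2) * t ^ (-(n:ℝ) / 2) := by ring
  have hval : ∫ r in Ioo (0:ℝ) R, (r ^ ((n:ℝ) - 2) * t ^ (-(n:ℝ) / 2)) =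
      R ^ ((n:ℝ) - 1) / ((n:ℝ) - 1) * t ^ (-(n:ℝ) / 2) := by
    rw [integral_mul_const, integral_rpow_Ioo hq hR.le,
      show ((n:ℝ) - 2 + 1) = (n:ℝ) - 1 by ring]
  linarith [hmono, hval.le, hval.ge]

lemma inner_ge (n : ℕ) (hn : 3 ≤ n) {t R m : ℝ} (hm : 0 < m) (hmR : m ≤ R)
    (ht1 : m ^ 2 / 2 < t) (ht2 : t < m ^ 2) :
    Real.exp (-(1/2)) / ((n:ℝ) - 1) * m⁻¹ ≤ ∫ r in Ioo (0:ℝ) R, Fk n t r := by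
  have h3 := hn3 hn
  have hq : (-1:ℝ) < (n:ℝ) - 2 := by linarith
  have ht : 0 < t := lt_trans (by positivity) ht1
  have h1 : ∫ r in Ioo (0:ℝ) m, Fk n t r ≤ ∫ r in Ioo (0:ℝ) R, Fk n t r := by
    apply setIntegral_mono_set (Fk_integrableOn n hn t R)
    · filter_upwards [ae_restrict_mem measurableSet_Ioo] with r hr
      exact Fk_nonneg n ht hr.1.le
    · exact HasSubset.Subset.eventuallyLE (Ioo_subset_Ioo le_rfl hmR)
  have h2 : ∫ r in Ioo (0:ℝ) m, ((m ^ 2 : ℝ) ^ (-(n:ℝ) / 2) * Real.exp (-(1/2)) *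
      r ^ ((n:ℝ) - 2)) ≤ ∫ r in Ioo (0:ℝ) m, Fk n t r := by
    apply setIntegral_mono_on
      (((intervalIntegral.intervalIntegrable_rpow' hq).1.mono_set
        Ioo_subset_Ioc_self).const_mul _)
      (Fk_integrableOn n hn t m) measurableSet_Ioo
    intro r hr
    unfold Fk
    have hrpos := hr.1
    have hrq : (0:ℝ) ≤ r ^ ((n:ℝ) - 2) := Real.rpow_nonneg hrpos.le _
    have hnp : -(n:ℝ) / 2 ≤ 0 := by
      have : (0:ℝ) < (n:ℝ) := by linarith
      linarith
    have hpow : (m ^ 2 : ℝ) ^ (-(n:ℝ) / 2) ≤ t ^ (-(n:ℝ) / 2) :=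
      Real.rpow_le_rpow_of_nonpos ht ht2.le hnp
    have hexp : Real.exp (-(1/2)) ≤ Real.exp (-(r ^ 2) / (4 * t)) := by
      apply Real.exp_le_exp.mpr
      rw [neg_div, neg_le_neg_iff, div_le_iff₀ (by positivity)]
      nlinarith [hr.2, hr.1]
    calc (m ^ 2 : ℝ) ^ (-(n:ℝ) / 2) * Real.exp (-(1/2)) * r ^ ((n:ℝ) - 2)
        ≤ t ^ (-(n:ℝ) / 2) * Real.exp (-(r ^ 2) / (4 * t)) * r ^ ((n:ℝ) - 2) := by
          apply mul_le_mul_of_nonneg_right _ hrq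
          exact mul_le_mul hpow hexp (Real.exp_pos _).le (Real.rpow_nonneg ht.le _)
      _ = r ^ ((n:ℝ) - 2) * t ^ (-(n:ℝ) / 2) * Real.exp (-(r ^ 2) / (4 * t)) := by ring
  have h4 : ∫ r in Ioo (0:ℝ) m, ((m ^ 2 : ℝ) ^ (-(n:ℝ) / 2) * Real.exp (-(1/2)) *
      r ^ ((n:ℝ) - 2)) = Real.exp (-(1/2)) / ((n:ℝ) - 1) * m⁻¹ := by
    rw [integral_const_mul, integral_rpow_Ioo hq hm.le]
    have e1 : (m ^ 2 : ℝ) ^ (-(n:ℝ) / 2) = m ^ (2 * (-(n:ℝ) / 2)) := by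
      rw [Real.rpow_mul hm.le, Real.rpow_two]
    have e2 : m ^ (2 * (-(n:ℝ) / 2)) * m ^ ((n:ℝ) - 1) = m⁻¹ := by
      rw [← Real.rpow_add hm, show 2 * (-(n:ℝ) / 2) + ((n:ℝ) - 1) = -1 by ring,
        Real.rpow_neg_one]
    rw [e1, show ((n:ℝ) - 2 + 1) = (n:ℝ) - 1 by ring, ← e2]
    ring
  linarith

lemma outer_meas (n : ℕ) (R : ℝ) :
    StronglyMeasurable fun t : ℝ => ∫ r in Ioo (0:ℝ) R, Fk n t r := by
  have h : ∀ t : ℝ, ∫ r in Ioo (0:ℝ) R, Fk n t r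
      = ∫ r, (Ioo (0:ℝ) R).indicator (Fk n t) r := fun t =>
    (integral_indicator measurableSet_Ioo).symm
  simp_rw [h]
  have hG : StronglyMeasurable fun p : ℝ × ℝ => (Ioo (0:ℝ) R).indicator (Fk n p.1) p.2 := by
    apply Measurable.stronglyMeasurable
    have e : (fun p : ℝ × ℝ => (Ioo (0:ℝ) R).indicator (Fk n p.1) p.2)
        = (univ ×ˢ Ioo (0:ℝ) R).indicator (fun p : ℝ × ℝ => Fk n p.1 p.2) := by
      ext p
      by_cases hp : p.2 ∈ Ioo (0:ℝ) R <;>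
        simp [Set.indicator_apply, hp, Set.mem_prod]
    rw [e]
    exact (Fk_meas n).indicator (MeasurableSet.univ.prod measurableSet_Ioo)
  exact hG.integral_prod_right'

end Stmt4Aux

open Stmt4Aux in
theorem stmt_4 (n : ℕ) (hn : 3 ≤ n) :
    ∃ C₁ > (0:ℝ), ∃ C₂ > (0:ℝ), ∀ T R : ℝ, 0 < T → 0 < R →
      C₁ * min (Real.sqrt T) R ≤
        (∫ t in Set.Ioo (0:ℝ) T, ∫ r in Set.Ioo (0:ℝ) R,
          r ^ ((n:ℝ) - 2) * t ^ (-(n:ℝ) / 2) * Real.exp (-(r ^ 2) / (4 * t))) ∧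
      (∫ t in Set.Ioo (0:ℝ) T, ∫ r in Set.Ioo (0:ℝ) R,
          r ^ ((n:ℝ) - 2) * t ^ (-(n:ℝ) / 2) * Real.exp (-(r ^ 2) / (4 * t))) ≤
        C₂ * min (Real.sqrt T) R := by
  have h3 := hn3 hn
  have hn1 : (0:ℝ) < (n:ℝ) - 1 := by linarith
  have hn2 : (0:ℝ) < (n:ℝ) - 2 := by linarith
  refine ⟨Real.exp (-(1/2)) / (2 * ((n:ℝ) - 1)), by positivity,
    2 * cg n + 2 / (((n:ℝ) - 1) * ((n:ℝ) - 2)), by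
      have := cg_pos hn; positivity, ?_⟩
  intro T R hT hR
  set C₁ : ℝ := Real.exp (-(1/2)) / (2 * ((n:ℝ) - 1)) with hC₁
  set C₂ : ℝ := 2 * cg n + 2 / (((n:ℝ) - 1) * ((n:ℝ) - 2)) with hC₂
  have key : (∫ t in Set.Ioo (0:ℝ) T, ∫ r in Set.Ioo (0:ℝ) R,
      r ^ ((n:ℝ) - 2) * t ^ (-(n:ℝ) / 2) * Real.exp (-(r ^ 2) / (4 * t)))
      = ∫ t in Ioo (0:ℝ) T, ∫ r in Ioo (0:ℝ) R, Fk n t r := rfl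
  rw [key]
  set f : ℝ → ℝ := fun t => ∫ r in Ioo (0:ℝ) R, Fk n t r with hf
  set m : ℝ := min (Real.sqrt T) R with hmdef
  have hm : 0 < m := lt_min (Real.sqrt_pos.2 hT) hR
  have hmsq : m ^ 2 ≤ T := by
    have h1 : m ≤ Real.sqrt T := min_le_left _ _
    nlinarith [Real.sq_sqrt hT.le, Real.sqrt_nonneg T, hm]
  -- bounding functions
  set A : ℝ → ℝ := fun t => cg n * t ^ (-(1:ℝ) / 2) with hA
  set B : ℝ → ℝ := fun t => R ^ ((n:ℝ) - 1) / ((n:ℝ) - 1) * t ^ (-(n:ℝ) / 2) with hB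
  set g : ℝ → ℝ := fun t => min (A t) (B t) with hg
  have hpowlt : -(n:ℝ) / 2 < -1 := by linarith
  have hR2 : (0:ℝ) < R ^ 2 := by positivity
  have iAImeas : Measurable A := (measurable_id'.pow_const _).const_mul _
  have iBmeas : Measurable B := (measurable_id'.pow_const _).const_mul _
  have iAIoc : ∀ X : ℝ, IntegrableOn A (Ioc 0 X) := fun X =>
    ((intervalIntegral.intervalIntegrable_rpow' (by norm_num)).1.const_mul _)
  have iAT : IntegrableOn A (Ioo 0 T) := (iAIoc T).mono_set Ioo_subset_Ioc_self
  have iBIoi : IntegrableOn B (Ioi (R ^ 2)) :=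
    (integrableOn_Ioi_rpow_of_lt hpowlt hR2).const_mul _
  have Apos : ∀ t : ℝ, 0 < t → 0 ≤ A t := fun t ht => by
    have := (cg_pos hn).le
    simp only [hA]; positivity
  have Bpos : ∀ t : ℝ, 0 < t → 0 ≤ B t := fun t ht => by
    simp only [hB]; positivity
  have gIoc : IntegrableOn g (Ioc 0 (R ^ 2)) := by
    apply Integrable.mono' (iAIoc (R ^ 2)) (iAImeas.min iBmeas).aestronglyMeasurable
    filter_upwards [ae_restrict_mem measurableSet_Ioc] with t ht
    rw [Real.norm_eq_abs, abs_of_nonneg (le_min (Apos t ht.1) (Bpos t ht.1))]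
    exact min_le_left _ _
  have gIoi : IntegrableOn g (Ioi (R ^ 2)) := by
    apply Integrable.mono' iBIoi (iAImeas.min iBmeas).aestronglyMeasurable
    filter_upwards [ae_restrict_mem measurableSet_Ioi] with t ht
    have ht0 : (0:ℝ) < t := lt_trans hR2 ht
    rw [Real.norm_eq_abs, abs_of_nonneg (le_min (Apos t ht0) (Bpos t ht0))]
    exact min_le_right _ _
  have hsub : Ioo (0:ℝ) T ⊆ Ioc 0 (R ^ 2) ∪ Ioi (R ^ 2) := by
    intro t ht
    rcases le_or_gt t (R ^ 2) with h | h
    · exact Or.inl ⟨ht.1, h⟩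
    · exact Or.inr h
  have gInt : IntegrableOn g (Ioo 0 T) := (gIoc.union gIoi).mono_set hsub
  have fnonneg : ∀ t : ℝ, 0 < t → 0 ≤ f t := fun t ht =>
    setIntegral_nonneg measurableSet_Ioo fun r hr => Fk_nonneg n ht hr.1.le
  have fnonneg' : (0:ℝ → ℝ) ≤ᵐ[volume.restrict (Ioo (0:ℝ) T)] f := by
    filter_upwards [ae_restrict_mem measurableSet_Ioo] with t ht
    exact fnonneg t ht.1
  have fboundg : f ≤ᵐ[volume.restrict (Ioo (0:ℝ) T)] g := by
    filter_upwards [ae_restrict_mem measurableSet_Ioo] with t ht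
    exact le_min (inner_le_gauss n hn R ht.1) (inner_le_pow n hn ht.1 hR)
  have fboundA : f ≤ᵐ[volume.restrict (Ioo (0:ℝ) T)] A := by
    filter_upwards [ae_restrict_mem measurableSet_Ioo] with t ht
    exact inner_le_gauss n hn R ht.1
  have fInt : IntegrableOn f (Ioo 0 T) := by
    apply Integrable.mono' gInt ((outer_meas n R).aestronglyMeasurable.restrict)
    filter_upwards [fboundg, fnonneg'] with t h1 h2
    rw [Real.norm_eq_abs, abs_of_nonneg h2]; exact h1
  constructor
  · -- LOWER BOUND
    have hsub2 : Ioo (m ^ 2 / 2) (m ^ 2) ⊆ Ioo (0:ℝ) T := fun t ht =>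
      ⟨lt_trans (by positivity) ht.1, lt_of_lt_of_le ht.2 hmsq⟩
    have step1 : ∫ t in Ioo (m ^ 2 / 2) (m ^ 2), f t ≤ ∫ t in Ioo (0:ℝ) T, f t :=
      setIntegral_mono_set fInt fnonneg' (HasSubset.Subset.eventuallyLE hsub2)
    have step2 : ∫ t in Ioo (m ^ 2 / 2) (m ^ 2),
        (Real.exp (-(1/2)) / ((n:ℝ) - 1) * m⁻¹) ≤ ∫ t in Ioo (m ^ 2 / 2) (m ^ 2), f t := by
      apply setIntegral_mono_on (integrableOn_const measure_Ioo_lt_top.ne)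
        (fInt.mono_set hsub2) measurableSet_Ioo
      intro t ht
      exact inner_ge n hn hm (min_le_right _ _) ht.1 ht.2
    have step3 : ∫ t in Ioo (m ^ 2 / 2) (m ^ 2),
        (Real.exp (-(1/2)) / ((n:ℝ) - 1) * m⁻¹) = C₁ * m := by
      rw [setIntegral_const, Real.volume_real_Ioo_of_le (by nlinarith : m ^ 2 / 2 ≤ m ^ 2),
        smul_eq_mul]
      rw [hC₁]
      field_simp
      ring
    linarith
  · -- UPPER BOUND
    have U1 : ∫ t in Ioo (0:ℝ) T, f t ≤ 2 * cg n * Real.sqrt T := by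
      have := integral_mono_of_nonneg fnonneg' iAT fboundA
      have hval : ∫ t in Ioo (0:ℝ) T, A t = 2 * cg n * Real.sqrt T := by
        rw [hA]
        rw [integral_const_mul, integral_rpow_Ioo (by norm_num) hT.le,
          show (-(1:ℝ) / 2 + 1) = 1/2 by norm_num, Real.sqrt_eq_rpow]
        ring
      linarith
    have U2 : ∫ t in Ioo (0:ℝ) T, f t ≤ C₂ * R := by
      have s1 : ∫ t in Ioo (0:ℝ) T, f t ≤ ∫ t in Ioo (0:ℝ) T, g t :=
        integral_mono_of_nonneg fnonneg' gInt fboundg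
      have s2 : ∫ t in Ioo (0:ℝ) T, g t ≤ ∫ t in Ioc (0:ℝ) (R ^ 2) ∪ Ioi (R ^ 2), g t := by
        apply setIntegral_mono_set (gIoc.union gIoi)
        · filter_upwards [ae_restrict_mem ((measurableSet_Ioc).union measurableSet_Ioi)]
            with t ht
          have ht0 : (0:ℝ) < t := by
            rcases ht with h | h
            · exact h.1
            · exact lt_trans hR2 h
          exact le_min (Apos t ht0) (Bpos t ht0)
        · exact HasSubset.Subset.eventuallyLE hsub
      have s3 : ∫ t in Ioc (0:ℝ) (R ^ 2) ∪ Ioi (R ^ 2), g t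
          = (∫ t in Ioc (0:ℝ) (R ^ 2), g t) + ∫ t in Ioi (R ^ 2), g t :=
        setIntegral_union (Ioc_disjoint_Ioi le_rfl) measurableSet_Ioi gIoc gIoi
      have s4 : ∫ t in Ioc (0:ℝ) (R ^ 2), g t ≤ ∫ t in Ioc (0:ℝ) (R ^ 2), A t :=
        setIntegral_mono_on gIoc (iAIoc (R ^ 2)) measurableSet_Ioc
          fun t _ => min_le_left _ _
      have s5 : ∫ t in Ioi (R ^ 2), g t ≤ ∫ t in Ioi (R ^ 2), B t :=
        setIntegral_mono_on gIoi iBIoi measurableSet_Ioi fun t _ => min_le_right _ _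
      have v1 : ∫ t in Ioc (0:ℝ) (R ^ 2), A t = 2 * cg n * R := by
        rw [hA, integral_Ioc_eq_integral_Ioo, integral_const_mul,
          integral_rpow_Ioo (by norm_num) hR2.le,
          show (-(1:ℝ) / 2 + 1) = 1/2 by norm_num]
        rw [show ((R:ℝ) ^ 2) ^ ((1:ℝ)/2) = R by
          rw [← Real.sqrt_eq_rpow, Real.sqrt_sq hR.le]]
        ring
      have v2 : ∫ t in Ioi (R ^ 2), B t = 2 / (((n:ℝ) - 1) * ((n:ℝ) - 2)) * R := by
        rw [hB, integral_const_mul, integral_Ioi_rpow_of_lt hpowlt hR2]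
        have e1 : ((R:ℝ) ^ 2) ^ (-(n:ℝ) / 2 + 1) = R ^ (2 * (-(n:ℝ) / 2 + 1)) := by
          rw [Real.rpow_mul hR.le, Real.rpow_two]
        rw [e1]
        have e2 : R ^ ((n:ℝ) - 1) * R ^ (2 * (-(n:ℝ) / 2 + 1)) = R := by
          rw [← Real.rpow_add hR, show ((n:ℝ) - 1) + 2 * (-(n:ℝ) / 2 + 1) = 1 by ring,
            Real.rpow_one]
        have hne : -(n:ℝ) / 2 + 1 ≠ 0 := by intro h; nlinarith
        have e4 : R ^ ((n:ℝ) - 1) / ((n:ℝ) - 1) *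
            (-R ^ (2 * (-(n:ℝ) / 2 + 1)) / (-(n:ℝ) / 2 + 1)) =
            (R ^ ((n:ℝ) - 1) * R ^ (2 * (-(n:ℝ) / 2 + 1))) *
              (-1 / (((n:ℝ) - 1) * (-(n:ℝ) / 2 + 1))) := by
          field_simp
        have e3 : (-1) / (((n:ℝ) - 1) * (-(n:ℝ) / 2 + 1))
            = 2 / (((n:ℝ) - 1) * ((n:ℝ) - 2)) := by
          rw [div_eq_div_iff (mul_ne_zero hn1.ne' hne) (mul_ne_zero hn1.ne' hn2.ne')]
          ring
        rw [e4, e2, e3]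
        ring
      rw [hC₂]
      linarith
    rcases le_total (Real.sqrt T) R with h | h
    · rw [hmdef, min_eq_left h]
      have hcc : 2 * cg n ≤ C₂ := by
        rw [hC₂]
        have : 0 < 2 / (((n:ℝ) - 1) * ((n:ℝ) - 2)) := by positivity
        linarith
      calc ∫ t in Ioo (0:ℝ) T, f t ≤ 2 * cg n * Real.sqrt T := U1
        _ ≤ C₂ * Real.sqrt T :=
          mul_le_mul_of_nonneg_right hcc (Real.sqrt_nonneg T)
    · rw [hmdef, min_eq_right h]
      exact U2
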